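/- Let $A \subset M$ be an expansive attractor for a homeomorphism $f : M \to M$ of a compact surface $M$. Then $M \setminus A$ has only finitely many connected components. -/

import Mathlib

private lemma homeo_image_connectedComponentIn {X : Type*} [TopologicalSpace X]
    (e : X ≃ₜ X) {F : Set X} {x : X} (hx : x ∈ F) :
    ⇑e '' connectedComponentIn F x = connectedComponentIn (⇑e '' F) (e x) := by
  apply Set.Subset.antisymm
  · exact e.continuous.image_connectedComponentIn_subset hx
  · have hx' : e x ∈ ⇑e '' F := Set.mem_image_of_mem _ hx
    have h2 := e.symm.continuous.image_connectedComponentIn_subset hx'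
    have hFF : ⇑e.symm '' (⇑e '' F) = F := by
      rw [Set.image_image]; simp
    rw [Homeomorph.symm_apply_apply, hFF] at h2
    have h3 := Set.image_mono (f := ⇑e) h2
    rwa [show ⇑e '' (⇑e.symm '' connectedComponentIn (⇑e '' F) (e x)) =
        connectedComponentIn (⇑e '' F) (e x) from by rw [Set.image_image]; simp] at h3

private lemma range_finite_of_iterate_eq {X : Type*} (φ : X → X) (C : X) {a b : ℕ} (hab : a < b)
    (h : φ^[a] C = φ^[b] C) : (Set.range fun n => φ^[n] C).Finite := by
  have key : ∀ n, ∃ m ≤ b, φ^[n] C = φ^[m] C := by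
    intro n
    induction n with
    | zero => exact ⟨0, Nat.zero_le _, rfl⟩
    | succ n ih =>
      obtain ⟨m, hmb, hm⟩ := ih
      rcases eq_or_lt_of_le hmb with h1 | h1
      · refine ⟨a + 1, by omega, ?_⟩
        rw [Function.iterate_succ_apply', Function.iterate_succ_apply', hm, h1, ← h]
      · exact ⟨m + 1, by omega, by
          rw [Function.iterate_succ_apply', Function.iterate_succ_apply', hm]⟩
  apply Set.Finite.subset (Set.Finite.image (fun m => φ^[m] C) (Set.finite_Iic b))
  rintro _ ⟨n, rfl⟩
  obtain ⟨m, hmb, hm⟩ := key n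
  exact ⟨m, hmb, hm.symm⟩

/-- An expansive attractor of a homeomorphism of a compact surface has
finitely many complementary domains. -/
theorem expansive_attractor_finitely_many_complementary_domains
    {M : Type*} [MetricSpace M] [CompactSpace M]
    [ChartedSpace (EuclideanSpace ℝ (Fin 2)) M]
    (f : M ≃ₜ M) (A : Set M) (hInv : f '' A = A) (α : ℝ) (hα : 0 < α)
    (hAttr : ⋂ n : ℕ, (⇑f)^[n] '' Metric.thickening α A = A)
    (hExp : ∀ x ∈ A, ∀ y ∈ A, x ≠ y →
      ∃ n : ℤ, α < dist ((f.toEquiv ^ n) x) ((f.toEquiv ^ n) y)) :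
    {C : Set M | ∃ x ∈ Aᶜ, C = connectedComponentIn Aᶜ x}.Finite := by
  classical
  set U := Metric.thickening α A with hU
  set S := {C : Set M | ∃ x ∈ Aᶜ, C = connectedComponentIn Aᶜ x} with hS
  -- points outside U are at distance ≥ α from A
  have hKdist : ∀ x, x ∉ U → ∀ a ∈ A, α ≤ dist x a := by
    intro x hx a ha
    by_contra h
    exact hx (Metric.mem_thickening_iff.mpr ⟨a, ha, by linarith⟩)
  haveI : LocallyConnectedSpace M :=
    ChartedSpace.locallyConnectedSpace (EuclideanSpace ℝ (Fin 2)) M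
  -- a uniform radius δ such that any point outside U has its δ-ball inside its
  -- connected component in Aᶜ
  obtain ⟨V, hVsub, hVopen, hVmem, hVconn⟩ :
      ∃ V : M → Set M, (∀ x, V x ⊆ Metric.ball x (α / 2)) ∧ (∀ x, IsOpen (V x)) ∧
        (∀ x, x ∈ V x) ∧ ∀ x, IsConnected (V x) := by
    have hlc := locallyConnectedSpace_iff_subsets_isOpen_isConnected.mp
      (inferInstance : LocallyConnectedSpace M)
    choose V h1 h2 h3 h4 using fun x =>
      hlc x (Metric.ball x (α / 2)) (Metric.ball_mem_nhds x (by linarith))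
    exact ⟨V, h1, h2, h3, h4⟩
  obtain ⟨δ, hδpos, hleb⟩ := lebesgue_number_lemma_of_metric isCompact_univ hVopen
    (fun x _ => Set.mem_iUnion.mpr ⟨x, hVmem x⟩)
  have hball : ∀ x, x ∉ U → Metric.ball x δ ⊆ connectedComponentIn Aᶜ x := by
    intro x hx
    obtain ⟨i, hi⟩ := hleb x (Set.mem_univ x)
    have hxVi : x ∈ V i := hi (Metric.mem_ball_self hδpos)
    have hVA : V i ⊆ Aᶜ := by
      intro y hy ha
      have h1 : dist x i < α / 2 := hVsub i hxVi
      have h2 : dist y i < α / 2 := hVsub i hy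
      have h3 := hKdist x hx y ha
      have h4 : dist x y ≤ dist x i + dist y i := dist_triangle_right x y i
      linarith
    exact hi.trans ((hVconn i).isPreconnected.subset_connectedComponentIn hxVi hVA)
  -- invariance of the complement
  have hfAc : ⇑f '' Aᶜ = Aᶜ := by
    rw [Set.image_compl_eq f.bijective, hInv]
  have hfsAc : ⇑f.symm '' Aᶜ = Aᶜ := by
    have h := f.toEquiv.symm_image_image Aᶜ
    rw [show (⇑f.toEquiv '' Aᶜ) = ⇑f '' Aᶜ from rfl, hfAc] at h
    exact h
  -- S is closed under forward and backward images
  have hSf : ∀ D ∈ S, ⇑f '' D ∈ S := by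
    rintro D ⟨x, hx, rfl⟩
    refine ⟨f x, ?_, ?_⟩
    · rw [← hfAc]; exact Set.mem_image_of_mem _ hx
    · rw [homeo_image_connectedComponentIn f hx, hfAc]
  have hSfs : ∀ D ∈ S, ⇑f.symm '' D ∈ S := by
    rintro D ⟨x, hx, rfl⟩
    refine ⟨f.symm x, ?_, ?_⟩
    · rw [← hfsAc]; exact Set.mem_image_of_mem _ hx
    · rw [homeo_image_connectedComponentIn f.symm hx, hfsAc]
  have hSiter : ∀ (n : ℕ), ∀ D ∈ S, (⇑f.symm)^[n] '' D ∈ S := by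
    intro n
    induction n with
    | zero => intro D hD; simpa using hD
    | succ n ih =>
      intro D hD
      rw [Function.iterate_succ', Set.image_comp]
      exact hSfs _ (ih D hD)
  -- cancellation of iterates
  have hre : ∀ (n : ℕ) (D : Set M), (⇑f)^[n] '' ((⇑f.symm)^[n] '' D) = D := by
    intro n D
    rw [← Set.image_comp]
    have hli : Function.LeftInverse (⇑f) (⇑f.symm) := f.apply_symm_apply
    have : (⇑f)^[n] ∘ (⇑f.symm)^[n] = id := funext (hli.iterate n)
    rw [this, Set.image_id]
  -- every complementary component escapes the thickening in backward time
  have hEsc : ∀ D ∈ S, ∃ n : ℕ, ((⇑f.symm)^[n] '' D ∩ Uᶜ).Nonempty := by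
    rintro D ⟨x, hx, rfl⟩
    by_contra h
    push_neg at h
    have hsub : ∀ n : ℕ, (⇑f.symm)^[n] '' connectedComponentIn Aᶜ x ⊆ U := by
      intro n y hy
      by_contra hyU
      exact Set.eq_empty_iff_forall_notMem.mp (h n) y ⟨hy, hyU⟩
    have hxA : x ∈ A := by
      rw [← hAttr]
      refine Set.mem_iInter.mpr fun n => ?_
      have hmm : x ∈ connectedComponentIn Aᶜ x := mem_connectedComponentIn hx
      refine ⟨(⇑f.symm)^[n] x, hsub n (Set.mem_image_of_mem _ hmm), ?_⟩
      exact Function.LeftInverse.iterate f.apply_symm_apply n x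
    exact hx hxA
  -- the collection of components meeting Uᶜ is finite
  set K0 := {D | D ∈ S ∧ (D ∩ Uᶜ).Nonempty} with hK0
  have hFinK : K0.Finite := by
    by_contra hinf
    replace hinf : K0.Infinite := hinf
    obtain ⟨t, -, htfin, hcov⟩ :=
      finite_cover_balls_of_compact (isCompact_univ (X := M)) (by positivity : (0:ℝ) < δ / 2)
    have emb := hinf.natEmbedding
    have hz : ∀ n : ℕ, ∃ z, z ∈ (emb n : Set M) ∩ Uᶜ := fun n => (emb n).2.2
    choose z hzmem using hz
    have hy : ∀ n : ℕ, ∃ y ∈ t, z n ∈ Metric.ball y (δ / 2) := by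
      intro n
      have := hcov (Set.mem_univ (z n))
      simpa using this
    choose y hyt hyball using hy
    haveI : Finite t := htfin.to_subtype
    obtain ⟨n, m, hnm, heq⟩ :=
      Finite.exists_ne_map_eq_of_infinite (fun n : ℕ => (⟨y n, hyt n⟩ : t))
    have hyeq : y n = y m := congrArg Subtype.val heq
    have hdist : dist (z m) (z n) < δ := by
      have h1 : dist (z n) (y n) < δ / 2 := hyball n
      have h2 : dist (z m) (y m) < δ / 2 := hyball m
      have h3 : dist (z m) (z n) ≤ dist (z m) (y m) + dist (z n) (y n) := by
        rw [hyeq]; exact dist_triangle_right _ _ _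
      linarith
    -- components are equal
    have hDn : (emb n : Set M) = connectedComponentIn Aᶜ (z n) := by
      obtain ⟨x, hx, hXeq⟩ := (emb n).2.1
      have : z n ∈ connectedComponentIn Aᶜ x := hXeq ▸ (hzmem n).1
      rw [hXeq, connectedComponentIn_eq this]
    have hDm : (emb m : Set M) = connectedComponentIn Aᶜ (z m) := by
      obtain ⟨x, hx, hXeq⟩ := (emb m).2.1
      have : z m ∈ connectedComponentIn Aᶜ x := hXeq ▸ (hzmem m).1
      rw [hXeq, connectedComponentIn_eq this]
    have hzm : z m ∈ connectedComponentIn Aᶜ (z n) := by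
      apply hball (z n) (hzmem n).2
      simpa [Metric.mem_ball] using hdist
    have : (emb n : Set M) = (emb m : Set M) := by
      rw [hDn, hDm, connectedComponentIn_eq hzm]
    exact hnm (emb.injective (Subtype.ext this))
  -- now suppose S is infinite and derive a contradiction
  rw [← Set.not_infinite]
  intro hSinf
  have hcover : S ⊆ ⋃ D ∈ K0, Set.range (fun n : ℕ => (⇑f)^[n] '' D) := by
    intro D hD
    obtain ⟨n, hn⟩ := hEsc D hD
    exact Set.mem_biUnion ⟨hSiter n D hD, hn⟩ ⟨n, hre n D⟩
  have hex : ∃ C ∈ K0, (Set.range fun n : ℕ => (⇑f)^[n] '' C).Infinite := by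
    by_contra h
    push_neg at h
    exact hSinf (Set.Finite.subset (Set.Finite.biUnion hFinK h) hcover)
  obtain ⟨C, hCK0, hCinf⟩ := hex
  -- orbit map identification
  have hiter_img : ∀ n : ℕ, (⇑f)^[n] '' C = (Set.image (⇑f))^[n] C := by
    intro n; rw [Set.image_iterate_eq]
  -- backward iterates of C
  set B : ℕ → Set M := fun m => (⇑f.symm)^[m] '' C with hB
  have hBS : ∀ m, B m ∈ S := fun m => hSiter m C hCK0.1
  have hBinj : Function.Injective B := by
    intro m m' hmm'
    by_contra hne
    wlog hlt : m < m' generalizing m m'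
    · exact this hmm'.symm (Ne.symm hne) (by omega)
    have h1 : (⇑f)^[m'] '' B m' = C := hre m' C
    have h2 : (⇑f)^[m'] '' B m = (⇑f)^[m' - m] '' C := by
      have : (⇑f)^[m'] = (⇑f)^[m' - m] ∘ (⇑f)^[m] := by
        rw [← Function.iterate_add, Nat.sub_add_cancel (le_of_lt hlt)]
      rw [hB]
      simp only [this, Set.image_comp]
      rw [hre m C]
    have h3 : (⇑f)^[m' - m] '' C = C := by rw [← h2, hmm', h1]
    have hcol : (Set.image (⇑f))^[0] C = (Set.image (⇑f))^[m' - m] C := by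
      rw [← hiter_img, ← hiter_img]
      simpa using h3.symm
    have hfin := range_finite_of_iterate_eq (Set.image (⇑f)) C (by omega : 0 < m' - m) hcol
    apply hCinf
    apply hfin.subset
    rintro _ ⟨n, rfl⟩
    exact ⟨n, (hiter_img n).symm⟩
  -- the set of backward times where the component meets Uᶜ is infinite
  set T : Set ℕ := {m | (B m ∩ Uᶜ).Nonempty} with hT
  have hTunb : ∀ m : ℕ, ∃ p ∈ T, m ≤ p := by
    intro m
    obtain ⟨n, hn⟩ := hEsc (B m) (hBS m)
    have : (⇑f.symm)^[n] '' B m = B (n + m) := by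
      rw [hB]
      simp only [← Set.image_comp, ← Function.iterate_add]
    exact ⟨n + m, by rw [hT, Set.mem_setOf_eq, ← this]; exact hn, by omega⟩
  have hTinf : T.Infinite := by
    intro hTfin
    rcases hTfin.bddAbove with ⟨b, hb⟩
    obtain ⟨p, hp, hbp⟩ := hTunb (b + 1)
    exact absurd (hb hp) (by omega)
  have himg : B '' T ⊆ K0 := by
    rintro _ ⟨m, hm, rfl⟩
    exact ⟨hBS m, hm⟩
  exact Set.not_infinite.mpr hFinK ((hTinf.image (hBinj.injOn)).mono himg)
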